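/- Let A and B be finite nonempty types, let F₁ : A → A and G : A × B → B, and let F : A × B → A × B be the triangular map F(x, y) = (F₁(x), G(x, y)). Suppose c ∈ A satisfies F₁(c) = c and {c} is the unique attractor of F₁, and suppose C₂ ⊆ B is the unique attractor of the map H : B → B, H(y) = G(c, y). Then {c} × C₂ is the unique attractor of F. -/

import Mathlib

/-- A nonempty subset `C` with `F '' C = C` that is minimal (w.r.t. inclusion) among
nonempty subsets with this property. -/
def IsAttractor {S : Type*} (F : S → S) (C : Set S) : Prop :=
  C.Nonempty ∧ F '' C = C ∧
    ∀ D : Set S, D.Nonempty → F '' D = D → D ⊆ C → D = C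

/-- Any nonempty invariant set in a finite space contains an attractor. -/
lemma exists_attractor_subset {S : Type*} [Fintype S] (f : S → S) (E : Set S)
    (hne : E.Nonempty) (hinv : f '' E = E) : ∃ C, C ⊆ E ∧ IsAttractor f C := by
  classical
  set T : Set (Set S) := {D | D.Nonempty ∧ f '' D = D ∧ D ⊆ E} with hT
  have hTne : T.Nonempty := ⟨E, hne, hinv, subset_rfl⟩
  obtain ⟨C, hCT, hmin⟩ := Set.Finite.exists_minimalFor id T (Set.toFinite T) hTne
  refine ⟨C, hCT.2.2, hCT.1, hCT.2.1, ?_⟩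
  intro D hDne hDinv hDC
  exact Set.Subset.antisymm hDC (hmin (show D ∈ T from ⟨hDne, hDinv, hDC.trans hCT.2.2⟩) hDC)

/-- Every point of a nonempty invariant set in a finite space lies in some attractor. -/
lemma mem_attractor_of_mem_invariant {S : Type*} [Fintype S] (f : S → S) (E : Set S)
    (hinv : f '' E = E) {x : S} (hx : x ∈ E) : ∃ C, IsAttractor f C ∧ x ∈ C := by
  have hmap : Set.MapsTo f E E := fun y hy => hinv ▸ ⟨y, hy, rfl⟩
  have hsurj : Set.SurjOn f E E := fun y hy => hinv.symm ▸ hy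
  have hinj : Set.InjOn f E :=
    (((Set.toFinite E).surjOn_iff_bijOn_of_mapsTo hmap).mp hsurj).injOn
  have hiter : ∀ k, f^[k] x ∈ E := by
    intro k
    induction k with
    | zero => exact hx
    | succ p ih => rw [Function.iterate_succ_apply']; exact hmap ih
  obtain ⟨i, j, hij, he⟩ := Finite.exists_ne_map_eq_of_infinite (fun k : ℕ => f^[k] x)
  -- (he is already beta-reduced)
  have cancel : ∀ i j : ℕ, i < j → f^[i] x = f^[j] x → f^[j - i] x = x := by
    intro i j hlt he
    have h1 : f^[i] (f^[j - i] x) = f^[i] x := by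
      rw [← Function.iterate_add_apply, show i + (j - i) = j by omega]
      exact he.symm
    exact (hinj.iterate hmap i) (hiter _) hx h1
  obtain ⟨n, hn, hper⟩ : ∃ n : ℕ, 0 < n ∧ f^[n] x = x := by
    rcases hij.lt_or_gt with h | h
    · exact ⟨j - i, by omega, cancel i j h he⟩
    · exact ⟨i - j, by omega, cancel j i h he.symm⟩
  have hNs : ∀ s : ℕ, f^[n * s] x = x := by
    intro s
    induction s with
    | zero => simp
    | succ p ih =>
      rw [Nat.mul_succ, Function.iterate_add_apply, hper, ih]
  set O : Set S := Set.range (fun k : ℕ => f^[k] x) with hO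
  have hxO : x ∈ O := ⟨0, rfl⟩
  have hOinv : f '' O = O := by
    apply Set.Subset.antisymm
    · rintro _ ⟨_, ⟨k, rfl⟩, rfl⟩
      exact ⟨k + 1, by simp [Function.iterate_succ_apply']⟩
    · rintro _ ⟨k, rfl⟩
      refine ⟨f^[k + n - 1] x, ⟨k + n - 1, rfl⟩, ?_⟩
      show f (f^[k + n - 1] x) = f^[k] x
      have h1 : f (f^[k + n - 1] x) = f^[k + n] x := by
        conv_rhs => rw [show k + n = (k + n - 1) + 1 by omega]
        exact (Function.iterate_succ_apply' f _ x).symm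
      rw [h1, Function.iterate_add_apply, hper]
  refine ⟨O, ⟨⟨x, hxO⟩, hOinv, ?_⟩, hxO⟩
  intro D hDne hDinv hDO
  apply Set.Subset.antisymm hDO
  rintro _ ⟨j, rfl⟩
  show f^[j] x ∈ D
  obtain ⟨y, hy⟩ := hDne
  obtain ⟨k, rfl⟩ := hDO hy
  simp only at hy ⊢
  have hfwd : ∀ m : ℕ, f^[m] (f^[k] x) ∈ D := by
    intro m
    induction m with
    | zero => exact hy
    | succ p ih =>
      rw [Function.iterate_succ_apply']
      have : f (f^[p] (f^[k] x)) ∈ f '' D := ⟨_, ih, rfl⟩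
      rwa [hDinv] at this
  have key : f^[j + n - k % n] (f^[k] x) = f^[j] x := by
    rw [← Function.iterate_add_apply]
    have hq := Nat.mod_add_div k n
    have hr : k % n < n := Nat.mod_lt _ hn
    have h1 : (j + n - k % n) + k = j + (n + n * (k / n)) := by omega
    rw [h1, Function.iterate_add_apply]
    have h2 : f^[n + n * (k / n)] x = x := by
      have := hNs (1 + k / n)
      rwa [Nat.mul_add, Nat.mul_one] at this
    rw [h2]
  exact key ▸ hfwd (j + n - k % n)

/-- If `c` is a steady state of `F₁` with `{c}` the unique attractor of `F₁`, and
`C₂` is the unique attractor of `y ↦ G (c, y)`, then `{c} ×ˢ C₂` is the unique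
attractor of the triangular map `F (x, y) = (F₁ x, G (x, y))`. -/
theorem stmt5 {A B : Type*} [Fintype A] [Fintype B] [Nonempty A] [Nonempty B]
    (F₁ : A → A) (G : A × B → B) (F : A × B → A × B)
    (hF : ∀ p : A × B, F p = (F₁ p.1, G p))
    (c : A) (hfix : F₁ c = c)
    (hc : IsAttractor F₁ {c})
    (hcu : ∀ D : Set A, IsAttractor F₁ D → D = {c})
    (C₂ : Set B)
    (h₂ : IsAttractor (fun y => G (c, y)) C₂)
    (h₂u : ∀ D : Set B, IsAttractor (fun y => G (c, y)) D → D = C₂) :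
    IsAttractor F ({c} ×ˢ C₂) ∧
      ∀ D : Set (A × B), IsAttractor F D → D = {c} ×ˢ C₂ := by
  have decomp : ∀ D : Set (A × B), F '' D = D → (∀ p ∈ D, p.1 = c) →
      D = {c} ×ˢ (Prod.snd '' D) ∧
        (fun y => G (c, y)) '' (Prod.snd '' D) = Prod.snd '' D := by
    intro D hDinv hfst
    constructor
    · ext p
      constructor
      · intro hp
        exact ⟨hfst p hp, ⟨p, hp, rfl⟩⟩
      · rintro ⟨hp1, q, hq, hq2⟩
        have : p = q := Prod.ext (by rw [hp1, hfst q hq]) hq2.symm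
        exact this ▸ hq
    · ext y
      constructor
      · rintro ⟨_, ⟨p, hp, rfl⟩, rfl⟩
        have h1 : F p ∈ D := hDinv ▸ ⟨p, hp, rfl⟩
        refine ⟨F p, h1, ?_⟩
        have hpe : (c, p.2) = p := Prod.ext (hfst p hp).symm rfl
        show (F p).2 = G (c, p.2)
        rw [hpe, hF p]
      · rintro ⟨p, hp, rfl⟩
        obtain ⟨q, hq, hq2⟩ : p ∈ F '' D := hDinv.symm ▸ hp
        refine ⟨q.2, ⟨q, hq, rfl⟩, ?_⟩
        show G (c, q.2) = p.2
        have hqe : (c, q.2) = q := Prod.ext (hfst q hq).symm rfl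
        rw [hqe]
        have := congrArg Prod.snd hq2
        rw [hF q] at this
        simpa using this
  -- Part 1: {c} ×ˢ C₂ is invariant under F.
  have hinv : F '' ({c} ×ˢ C₂) = {c} ×ˢ C₂ := by
    ext p
    constructor
    · rintro ⟨⟨a, b⟩, ⟨ha, hb⟩, rfl⟩
      simp only [Set.mem_singleton_iff] at ha
      rw [hF]
      refine ⟨?_, ?_⟩
      · show F₁ (a, b).1 ∈ ({c} : Set A)
        simp only
        rw [ha, hfix]
        exact rfl
      · show G (a, b) ∈ C₂
        have hb' : b ∈ C₂ := hb
        have : G (c, b) ∈ (fun y => G (c, y)) '' C₂ := ⟨b, hb', rfl⟩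
        rw [h₂.2.1] at this
        rw [show ((a, b) : A × B) = (c, b) from Prod.ext ha rfl]
        exact this
    · rintro ⟨hp1, hp2⟩
      simp only [Set.mem_singleton_iff] at hp1
      obtain ⟨y, hy, hy2⟩ : p.2 ∈ (fun y => G (c, y)) '' C₂ := h₂.2.1.symm ▸ hp2
      have hy2' : G (c, y) = p.2 := hy2
      refine ⟨(c, y), ⟨rfl, hy⟩, ?_⟩
      rw [hF]
      exact Prod.ext (by simpa using hfix.trans hp1.symm) (by simpa using hy2')
  have part1 : IsAttractor F ({c} ×ˢ C₂) := by
    refine ⟨⟨(c, h₂.1.choose), rfl, h₂.1.choose_spec⟩, hinv, ?_⟩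
    intro D hDne hDinv hDsub
    have hfst : ∀ p ∈ D, p.1 = c := fun p hp => (hDsub hp).1
    obtain ⟨hDeq, hHinv⟩ := decomp D hDinv hfst
    have hsndne : (Prod.snd '' D).Nonempty := hDne.image _
    have hsndsub : Prod.snd '' D ⊆ C₂ := by
      rintro _ ⟨p, hp, rfl⟩
      exact (hDsub hp).2
    have := h₂.2.2 (Prod.snd '' D) hsndne hHinv hsndsub
    rw [hDeq, this]
  refine ⟨part1, ?_⟩
  intro D hD
  obtain ⟨hDne, hDinv, hDmin⟩ := hD
  have hfstinv : F₁ '' (Prod.fst '' D) = Prod.fst '' D := by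
    ext a
    constructor
    · rintro ⟨_, ⟨p, hp, rfl⟩, rfl⟩
      refine ⟨F p, hDinv ▸ ⟨p, hp, rfl⟩, ?_⟩
      rw [hF]
    · rintro ⟨p, hp, rfl⟩
      obtain ⟨q, hq, hq2⟩ : p ∈ F '' D := hDinv.symm ▸ hp
      refine ⟨q.1, ⟨q, hq, rfl⟩, ?_⟩
      rw [← hq2, hF]
  have hfst : ∀ p ∈ D, p.1 = c := by
    intro p hp
    obtain ⟨C, hC, hmem⟩ :=
      mem_attractor_of_mem_invariant F₁ (Prod.fst '' D) hfstinv ⟨p, hp, rfl⟩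
    have hCc := hcu C hC
    rw [hCc] at hmem
    exact hmem
  obtain ⟨hDeq, hHinv⟩ := decomp D hDinv hfst
  obtain ⟨C, hCsub, hC⟩ :=
    exists_attractor_subset (fun y => G (c, y)) (Prod.snd '' D) (hDne.image _) hHinv
  have hCeq : C = C₂ := h₂u C hC
  rw [hCeq] at hCsub
  have hsub : {c} ×ˢ C₂ ⊆ D := by
    rintro ⟨a, b⟩ ⟨ha, hb⟩
    simp only [Set.mem_singleton_iff] at ha
    rw [hDeq]
    exact ⟨ha, hCsub hb⟩
  exact (hDmin ({c} ×ˢ C₂) part1.1 hinv hsub).symm
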